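/- There exist constants d, D > 0 (depending only on p, n, β) such that ∫_{ℚ_p^n} e^{−t ‖ξ‖_p^{β}} dⁿξ ≤ D t^{−n/β} for all t > 0, and d t^{−n/β} ≤ ∫_{ℚ_p^n∖ℤ_p^n} e^{−t ‖ξ‖_p^{β}} dⁿξ for all 0 < t ≤ 1. -/

import Mathlib

open MeasureTheory Filter Topology Metric

noncomputable instance qpnMeasurableSpace {p : ℕ} [Fact p.Prime] {n : ℕ} :
    MeasurableSpace (Fin n → ℚ_[p]) := borel _

instance qpnBorelSpace {p : ℕ} [Fact p.Prime] {n : ℕ} :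
    BorelSpace (Fin n → ℚ_[p]) := ⟨rfl⟩

open scoped ENNReal NNReal

namespace GaussPadicAux

variable {p : ℕ} [hp : Fact p.Prime]

lemma digit (k : ℤ) (z : ℚ_[p]) (hz : ‖z‖ ≤ (p:ℝ)^(k+1)) :
    ∃ j : Fin p, ‖z - (j:ℕ) * (p:ℚ_[p])^(-(k+1))‖ ≤ (p:ℝ)^k := by
  have hp1 : (1:ℝ) < p := Nat.one_lt_cast.2 hp.out.one_lt
  have hp0 : (0:ℝ) < p := lt_trans one_pos hp1
  have hpq : (p:ℚ_[p]) ≠ 0 := Nat.cast_ne_zero.2 hp.out.ne_zero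
  set w : ℚ_[p] := (p:ℚ_[p])^(k+1) * z with hw
  have hwnorm : ‖w‖ ≤ 1 := by
    rw [hw, norm_mul, Padic.norm_p_zpow]
    calc (p:ℝ)^(-(k+1)) * ‖z‖ ≤ (p:ℝ)^(-(k+1)) * (p:ℝ)^(k+1) := by
          exact mul_le_mul_of_nonneg_left hz (zpow_nonneg hp0.le _)
      _ = 1 := by rw [← zpow_add₀ (ne_of_gt hp0), neg_add_cancel, zpow_zero]
  set W : ℤ_[p] := ⟨w, hwnorm⟩ with hW
  set j := W.appr 1 with hj
  have hjlt : j < p := by simpa using W.appr_lt 1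
  have hspec := W.appr_spec 1
  rw [Ideal.mem_span_singleton, pow_one] at hspec
  obtain ⟨u, hu⟩ := hspec
  refine ⟨⟨j, hjlt⟩, ?_⟩
  have h1 : w - (j:ℚ_[p]) = (p:ℚ_[p]) * (u:ℚ_[p]) := by
    exact_mod_cast congrArg (PadicInt.Coe.ringHom (p := p)) hu
  have h3 : z = (p:ℚ_[p])^(-(k+1)) * w := by
    rw [hw, ← mul_assoc, ← zpow_add₀ hpq, neg_add_cancel, zpow_zero, one_mul]
  have key : z - (j:ℕ) * (p:ℚ_[p])^(-(k+1)) = (p:ℚ_[p])^(-(k+1)) * ((p:ℚ_[p]) * (u:ℚ_[p])) := by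
    rw [← h1, h3]; push_cast; ring
  rw [key, norm_mul, norm_mul, Padic.norm_p_zpow, Padic.norm_p, neg_neg]
  calc (p:ℝ)^(k+1) * ((p:ℝ)⁻¹ * ‖(u:ℚ_[p])‖) ≤ (p:ℝ)^(k+1) * ((p:ℝ)⁻¹ * 1) := by
        gcongr
        exact u.norm_le_one
    _ = (p:ℝ)^k := by
        rw [mul_one, ← zpow_neg_one, ← zpow_add₀ (ne_of_gt hp0)]; ring_nf

variable {n : ℕ}



lemma mem_cb {m : ℕ} (y x : Fin m → ℚ_[p]) (r : ℝ) (hr : 0 ≤ r) :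
    x ∈ closedBall y r ↔ ∀ i, ‖x i - y i‖ ≤ r := by
  rw [mem_closedBall, dist_pi_le_iff hr]
  simp [dist_eq_norm]

lemma ball_decomp (k : ℤ) :
    closedBall (0 : Fin n → ℚ_[p]) ((p:ℝ)^(k+1)) =
      ⋃ v : Fin n → Fin p,
        closedBall (fun i => ((v i : ℕ) : ℚ_[p]) * (p:ℚ_[p])^(-(k+1))) ((p:ℝ)^k) := by
  have hp0 : (0:ℝ) < p := by exact_mod_cast hp.out.pos
  ext x
  simp only [Set.mem_iUnion, mem_cb _ _ _ (zpow_nonneg hp0.le _)]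
  constructor
  · intro hx
    have hx' : ∀ i, ‖x i‖ ≤ (p:ℝ)^(k+1) := fun i => by simpa using hx i
    choose v hv using fun i => digit k (x i) (hx' i)
    exact ⟨v, hv⟩
  · rintro ⟨v, hv⟩ i
    have h1 : ‖((v i : ℕ) : ℚ_[p]) * (p:ℚ_[p])^(-(k+1))‖ ≤ (p:ℝ)^(k+1) := by
      rw [norm_mul, Padic.norm_p_zpow, neg_neg]
      have : ‖((v i : ℕ) : ℚ_[p])‖ ≤ 1 := by
        have := Padic.norm_int_le_one (p := p) ((v i : ℕ) : ℤ)
        simpa using this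
      nlinarith [zpow_pos hp0 (k+1)]
    have h2 : ‖x i - (0: Fin n → ℚ_[p]) i‖ ≤
        max ‖x i - ((v i : ℕ) : ℚ_[p]) * (p:ℚ_[p])^(-(k+1))‖
            ‖((v i : ℕ) : ℚ_[p]) * (p:ℚ_[p])^(-(k+1))‖ := by
      simpa using Padic.nonarchimedean
        (x i - ((v i : ℕ) : ℚ_[p]) * (p:ℚ_[p])^(-(k+1)))
        (((v i : ℕ) : ℚ_[p]) * (p:ℚ_[p])^(-(k+1)))
    refine h2.trans (max_le ((hv i).trans ?_) h1)
    exact zpow_le_zpow_right₀ (by exact_mod_cast hp.out.one_le) (by omega)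

lemma ball_pairwise_disj (k : ℤ) :
    Pairwise (Function.onFun Disjoint (fun v : Fin n → Fin p =>
      closedBall (fun i => ((v i : ℕ) : ℚ_[p]) * (p:ℚ_[p])^(-(k+1))) ((p:ℝ)^k))) := by
  have hp0 : (0:ℝ) < p := by exact_mod_cast hp.out.pos
  intro v w hvw
  rw [Function.onFun, Set.disjoint_left]
  intro x hxv hxw
  apply hvw
  funext i
  rw [mem_cb _ _ _ (zpow_nonneg hp0.le _)] at hxv hxw
  by_contra hne
  -- the difference of centers at coordinate i has norm p^(k+1)
  set Δ : ℤ := ((v i : ℕ) : ℤ) - ((w i : ℕ) : ℤ) with hΔ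
  have hd : ((v i : ℕ) : ℚ_[p]) * (p:ℚ_[p])^(-(k+1)) - ((w i : ℕ) : ℚ_[p]) * (p:ℚ_[p])^(-(k+1))
      = (Δ : ℚ_[p]) * (p:ℚ_[p])^(-(k+1)) := by rw [hΔ]; push_cast; ring
  have hnd : ¬ ((p:ℤ) ∣ Δ) := by
    intro hdvd
    have h1 : ((v i : ℕ) : ℤ) < p := by exact_mod_cast (v i).2
    have h2 : ((w i : ℕ) : ℤ) < p := by exact_mod_cast (w i).2
    have h3 : ((v i : ℕ) : ℤ) ≠ ((w i : ℕ) : ℤ) := by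
      intro h; exact hne (Fin.ext (by exact_mod_cast h))
    have hp2 : (2:ℤ) ≤ p := by exact_mod_cast hp.out.two_le
    have h0v : (0:ℤ) ≤ ((v i : ℕ) : ℤ) := Int.natCast_nonneg _
    have h0w : (0:ℤ) ≤ ((w i : ℕ) : ℤ) := Int.natCast_nonneg _
    rcases lt_trichotomy (((v i : ℕ) : ℤ) - ((w i : ℕ) : ℤ)) 0 with h | h | h
    · have := Int.le_of_dvd (by omega) (dvd_neg.2 hdvd); omega
    · exact h3 (by omega)
    · have := Int.le_of_dvd h hdvd; omega
  have hnorm1 : ‖(Δ : ℚ_[p])‖ = 1 := by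
    have hle := Padic.norm_int_le_one (p := p) Δ
    have hlt := (Padic.norm_intCast_lt_one_iff (p := p) (k := Δ))
    rcases lt_or_eq_of_le hle with h | h
    · exact absurd (hlt.1 h) hnd
    · exact h
  have hcnorm : ‖((v i : ℕ) : ℚ_[p]) * (p:ℚ_[p])^(-(k+1)) - ((w i : ℕ) : ℚ_[p]) * (p:ℚ_[p])^(-(k+1))‖ = (p:ℝ)^(k+1) := by
    rw [hd, norm_mul, hnorm1, Padic.norm_p_zpow, neg_neg, one_mul]
  -- but it's also ≤ p^k
  have hub : ‖((v i : ℕ) : ℚ_[p]) * (p:ℚ_[p])^(-(k+1)) - ((w i : ℕ) : ℚ_[p]) * (p:ℚ_[p])^(-(k+1))‖ ≤ (p:ℝ)^k := by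
    have key : ((v i : ℕ) : ℚ_[p]) * (p:ℚ_[p])^(-(k+1)) - ((w i : ℕ) : ℚ_[p]) * (p:ℚ_[p])^(-(k+1))
        = (x i - ((w i : ℕ) : ℚ_[p]) * (p:ℚ_[p])^(-(k+1))) - (x i - ((v i : ℕ) : ℚ_[p]) * (p:ℚ_[p])^(-(k+1))) := by ring
    have key2 : (x i - ((w i : ℕ) : ℚ_[p]) * (p:ℚ_[p])^(-(k+1))) - (x i - ((v i : ℕ) : ℚ_[p]) * (p:ℚ_[p])^(-(k+1)))
        = (x i - ((w i : ℕ) : ℚ_[p]) * (p:ℚ_[p])^(-(k+1))) + -(x i - ((v i : ℕ) : ℚ_[p]) * (p:ℚ_[p])^(-(k+1))) := by ring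
    rw [key, key2]
    refine le_trans (Padic.nonarchimedean _ _) ?_
    rw [norm_neg]
    exact max_le (hxw i) (hxv i)
  rw [hcnorm] at hub
  have : (p:ℝ)^k < (p:ℝ)^(k+1) :=
    zpow_lt_zpow_right₀ (by exact_mod_cast hp.out.one_lt) (by omega)
  linarith

variable (μ : Measure (Fin n → ℚ_[p])) [μ.IsAddHaarMeasure]

lemma meas_center (c : Fin n → ℚ_[p]) (r : ℝ) :
    μ (closedBall c r) = μ (closedBall (0 : Fin n → ℚ_[p]) r) := by
  have hpre : (fun x => c + x) ⁻¹' (closedBall c r) = closedBall (0 : Fin n → ℚ_[p]) r := by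
    ext x
    simp only [Set.mem_preimage, mem_closedBall]
    constructor
    · intro h; simpa [dist_eq_norm] using h
    · intro h
      have : dist (c + x) c = dist x 0 := by simp [dist_eq_norm]
      rw [this]; exact h
  rw [← hpre, measure_preimage_add]

lemma meas_ball_step (k : ℤ) :
    μ (closedBall (0 : Fin n → ℚ_[p]) ((p:ℝ)^(k+1)))
      = (p:ℝ≥0∞)^n * μ (closedBall (0 : Fin n → ℚ_[p]) ((p:ℝ)^k)) := by
  rw [ball_decomp k]
  rw [measure_iUnion (ball_pairwise_disj k) (fun v => measurableSet_closedBall)]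
  have : ∀ v : Fin n → Fin p,
      μ (closedBall (fun i => ((v i : ℕ) : ℚ_[p]) * (p:ℚ_[p])^(-(k+1))) ((p:ℝ)^k))
        = μ (closedBall (0 : Fin n → ℚ_[p]) ((p:ℝ)^k)) := fun v => meas_center μ _ _
  rw [tsum_congr this, tsum_fintype]
  simp only [Finset.sum_const, Finset.card_univ, Fintype.card_fun, Fintype.card_fin, nsmul_eq_mul]
  push_cast
  ring

lemma meas_ball_lt_top (r : ℝ) : μ (closedBall (0 : Fin n → ℚ_[p]) r) < ⊤ :=
  (isCompact_closedBall _ _).measure_lt_top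

lemma meas_ball_formula (hμ : μ (closedBall (0 : Fin n → ℚ_[p]) 1) = 1) (k : ℤ) :
    μ (closedBall (0 : Fin n → ℚ_[p]) ((p:ℝ)^k)) = ((p:ℝ≥0∞)^n)^k := by
  have hpne : ((p:ℝ≥0∞)^n) ≠ 0 := by
    simp [hp.out.ne_zero]
  have hptop : ((p:ℝ≥0∞)^n) ≠ ⊤ := by
    exact ENNReal.pow_ne_top (ENNReal.natCast_ne_top p)
  induction k using Int.induction_on with
  | zero => simpa using hμ
  | succ k ih =>
      rw [meas_ball_step μ k, ih, show ((k:ℤ)+1) = 1 + (k:ℤ) by ring,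
        ENNReal.zpow_add hpne hptop, zpow_one]
  | pred k ih =>
      have step := meas_ball_step μ (-(k+1))
      have : (-(k+1) : ℤ) + 1 = -(k:ℤ) := by ring
      rw [this, ih] at step
      have goal : (p:ℝ≥0∞)^n * ((p:ℝ≥0∞)^n)^(-(k+1) : ℤ) = (p:ℝ≥0∞)^n * μ (closedBall (0 : Fin n → ℚ_[p]) ((p:ℝ)^(-(k+1):ℤ))) := by
        rw [← step, show (-(k:ℤ)) = 1 + (-((k:ℤ)+1)) by ring, ENNReal.zpow_add hpne hptop, zpow_one]
      rw [show (-(k:ℤ) - 1) = -((k:ℤ)+1) by ring]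
      exact ((ENNReal.mul_right_inj hpne hptop).1 goal.symm)

lemma norm_exists_zpow (hn : 0 < n) (x : Fin n → ℚ_[p]) (hx : x ≠ 0) :
    ∃ k : ℤ, ‖x‖ = (p:ℝ)^k := by
  have hne : (Finset.univ : Finset (Fin n)).Nonempty := by
    simpa [Finset.univ_nonempty_iff] using Fin.pos_iff_nonempty.1 hn
  obtain ⟨i₀, -, hi₀⟩ := Finset.exists_mem_eq_sup Finset.univ hne (fun i => ‖x i‖₊)
  have hnorm : ‖x‖ = ‖x i₀‖ := by
    rw [Pi.norm_def, hi₀]; simp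
  have hx0 : x i₀ ≠ 0 := by
    intro h0
    obtain ⟨j, hj⟩ : ∃ j, x j ≠ 0 := by
      by_contra hall
      push_neg at hall
      exact hx (funext hall)
    have : ‖x j‖₊ ≤ ‖x i₀‖₊ := hi₀ ▸ Finset.le_sup (f := fun i => ‖x i‖₊) (Finset.mem_univ j)
    rw [h0] at this
    simp at this
    exact hj this
  exact ⟨-(x i₀).valuation, by rw [hnorm, Padic.norm_eq_zpow_neg_valuation hx0]⟩

def shell (k : ℤ) : Set (Fin n → ℚ_[p]) :=
  closedBall (0 : Fin n → ℚ_[p]) ((p:ℝ)^k) \ closedBall (0 : Fin n → ℚ_[p]) ((p:ℝ)^(k-1))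

lemma mem_shell_iff (k : ℤ) (x : Fin n → ℚ_[p]) :
    x ∈ shell (p := p) (n := n) k ↔ (p:ℝ)^(k-1) < ‖x‖ ∧ ‖x‖ ≤ (p:ℝ)^k := by
  simp only [shell, Set.mem_diff, mem_closedBall, dist_zero_right, not_le]
  tauto

lemma norm_of_mem_shell (hn : 0 < n) (k : ℤ) (x : Fin n → ℚ_[p])
    (hx : x ∈ shell (p := p) (n := n) k) : ‖x‖ = (p:ℝ)^k := by
  rw [mem_shell_iff] at hx
  have hx0 : x ≠ 0 := by
    intro h0
    rw [h0] at hx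
    simp only [norm_zero] at hx
    exact absurd hx.1 (not_lt.2 (zpow_nonneg (by positivity) _))
  obtain ⟨m, hm⟩ := norm_exists_zpow hn x hx0
  rw [hm] at hx ⊢
  have hp1 : (1:ℝ) < p := by exact_mod_cast hp.out.one_lt
  have h1 : k - 1 < m := (zpow_lt_zpow_iff_right₀ hp1).1 hx.1
  have h2 : m ≤ k := (zpow_le_zpow_iff_right₀ hp1).1 hx.2
  congr 1
  omega

lemma shells_disjoint : Pairwise (Function.onFun Disjoint (shell (p := p) (n := n))) := by
  intro k l hkl
  rw [Function.onFun, Set.disjoint_left]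
  intro x hxk hxl
  rw [mem_shell_iff] at hxk hxl
  have hp1 : (1:ℝ) < p := by exact_mod_cast hp.out.one_lt
  rcases lt_or_gt_of_ne hkl with h | h
  · have hkl' : (k:ℤ) ≤ l - 1 := by omega
    exact absurd (hxl.1.trans_le hxk.2) (not_lt.2 (zpow_le_zpow_right₀ hp1.le hkl'))
  · have hkl' : (l:ℤ) ≤ k - 1 := by omega
    exact absurd (hxk.1.trans_le hxl.2) (not_lt.2 (zpow_le_zpow_right₀ hp1.le hkl'))

lemma iUnion_shells (hn : 0 < n) :
    (⋃ k : ℤ, shell (p := p) (n := n) k) = {x : Fin n → ℚ_[p] | x ≠ 0} := by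
  ext x
  simp only [Set.mem_iUnion, Set.mem_setOf_eq]
  constructor
  · rintro ⟨k, hk⟩ h0
    rw [mem_shell_iff] at hk
    rw [h0] at hk
    simp only [norm_zero] at hk
    exact absurd hk.1 (not_lt.2 (zpow_nonneg (by positivity) _))
  · intro hx
    obtain ⟨m, hm⟩ := norm_exists_zpow hn x hx
    refine ⟨m, ?_⟩
    rw [mem_shell_iff, hm]
    have hp1 : (1:ℝ) < p := by exact_mod_cast hp.out.one_lt
    exact ⟨zpow_lt_zpow_right₀ hp1 (by omega), le_refl _⟩

lemma meas_shell (hμ : μ (closedBall (0 : Fin n → ℚ_[p]) 1) = 1) (k : ℤ) :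
    μ (shell (p := p) (n := n) k) = ((p:ℝ≥0∞)^n)^k - ((p:ℝ≥0∞)^n)^(k-1) := by
  rw [shell, measure_diff ?_ ?_ ?_]
  · rw [meas_ball_formula μ hμ, meas_ball_formula μ hμ]
  · intro x hx
    rw [mem_closedBall] at hx ⊢
    refine hx.trans ?_
    exact zpow_le_zpow_right₀ (by exact_mod_cast hp.out.one_le) (by omega)
  · exact measurableSet_closedBall.nullMeasurableSet
  · exact (meas_ball_lt_top μ _).ne

lemma meas_zero_singleton (hn : 0 < n) (hμ : μ (closedBall (0 : Fin n → ℚ_[p]) 1) = 1) :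
    μ {(0 : Fin n → ℚ_[p])} = 0 := by
  have hQ1 : (1:ℝ≥0∞) < (p:ℝ≥0∞)^n := by
    exact one_lt_pow₀ (by exact_mod_cast Nat.one_lt_cast.2 hp.out.one_lt) hn.ne'
  have hball : ∀ j : ℕ, μ {(0 : Fin n → ℚ_[p])} ≤ (((p:ℝ≥0∞)^n)⁻¹)^j := by
    intro j
    have hsub : {(0 : Fin n → ℚ_[p])} ⊆ closedBall 0 ((p:ℝ)^(-(j:ℤ))) := by
      intro x hx
      rw [Set.mem_singleton_iff] at hx
      subst hx
      exact mem_closedBall_self (by positivity)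
    calc μ {(0 : Fin n → ℚ_[p])} ≤ μ (closedBall 0 ((p:ℝ)^(-(j:ℤ)))) := measure_mono hsub
      _ = ((p:ℝ≥0∞)^n)^(-(j:ℤ)) := meas_ball_formula μ hμ _
      _ = (((p:ℝ≥0∞)^n)⁻¹)^j := by
          rw [ENNReal.zpow_neg, zpow_natCast, ← ENNReal.inv_pow]

  have htend : Filter.Tendsto (fun j : ℕ => (((p:ℝ≥0∞)^n)⁻¹)^j) Filter.atTop (nhds 0) :=
    ENNReal.tendsto_pow_atTop_nhds_zero_of_lt_one (ENNReal.inv_lt_one.2 hQ1)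
  have hle := ge_of_tendsto htend (Filter.Eventually.of_forall hball)
  exact le_antisymm hle zero_le

lemma ofReal_p_pow_zpow (m : ℕ) (k : ℤ) :
    ENNReal.ofReal (((p:ℝ)^(m:ℕ))^(k:ℤ)) = ((p:ℝ≥0∞)^m)^k := by
  have hpp : (0:ℝ) < p := by exact_mod_cast hp.out.pos
  have hp0 : (0:ℝ) < (p:ℝ)^m := by positivity
  cases k with
  | ofNat j =>
      simp only [Int.ofNat_eq_coe, zpow_natCast]
      rw [← pow_mul, ← pow_mul, ENNReal.ofReal_pow (by positivity)]
      congr 1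
      simp
  | negSucc j =>
      rw [zpow_negSucc, zpow_negSucc, ENNReal.ofReal_inv_of_pos (by positivity)]
      congr 1
      rw [← pow_mul, ← pow_mul, ENNReal.ofReal_pow (by positivity)]
      congr 1
      simp

lemma exp_le_rpow (s : ℝ) (hs : 0 < s) (x : ℝ) (hx : 1 ≤ x) :
    Real.exp (-x) ≤ ((Nat.ceil s).factorial : ℝ) * x ^ (-s) := by
  have hx0 : (0:ℝ) < x := lt_of_lt_of_le one_pos hx
  set C₀ : ℝ := ((Nat.ceil s).factorial : ℝ) with hC
  have hC0 : (0:ℝ) < C₀ := by positivity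
  have h1 : x ^ s ≤ x ^ (Nat.ceil s : ℕ) := by
    rw [← Real.rpow_natCast x (Nat.ceil s)]
    exact Real.rpow_le_rpow_of_exponent_le hx (Nat.le_ceil s)
  have h2 : x ^ (Nat.ceil s : ℕ) ≤ C₀ * Real.exp x := by
    have := Real.pow_div_factorial_le_exp x hx0.le (Nat.ceil s)
    rw [div_le_iff₀ (by positivity)] at this
    calc x ^ (Nat.ceil s : ℕ) ≤ Real.exp x * (Nat.ceil s).factorial := this
      _ = C₀ * Real.exp x := by ring
  have h3 : x ^ s ≤ C₀ * Real.exp x := h1.trans h2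
  have hxs : (0:ℝ) < x ^ s := Real.rpow_pos_of_pos hx0 s
  have hex : (0:ℝ) < Real.exp x := Real.exp_pos x
  rw [Real.exp_neg, Real.rpow_neg hx0.le]
  calc (Real.exp x)⁻¹ = x ^ s * ((x ^ s)⁻¹ * (Real.exp x)⁻¹) := by field_simp
    _ ≤ (C₀ * Real.exp x) * ((x ^ s)⁻¹ * (Real.exp x)⁻¹) := by gcongr
    _ = C₀ * (x ^ s)⁻¹ := by field_simp

noncomputable def sExp (n : ℕ) (β : ℝ) : ℝ := ((n:ℝ)+1)/β

lemma scale_facts (hβ : (0:ℝ) < β) (t : ℝ) (ht : 0 < t) :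
    ∃ a : ℤ, (∀ k : ℤ, a ≤ k → 1 ≤ t * (((p:ℝ)^k)^β))
      ∧ ((p:ℝ)^(a:ℤ))^n ≤ (p:ℝ)^n * t ^ (-((n:ℝ)/β))
      ∧ t^(-(sExp n β)) * ((p:ℝ)^(a+1:ℤ))⁻¹ ≤ t ^ (-((n:ℝ)/β))
      ∧ (t ≤ 1 → 1 ≤ a + 1 ∧ t * (((p:ℝ)^(a+1:ℤ))^β) ≤ ((p:ℝ)^2)^β
          ∧ t ^ (-((n:ℝ)/β)) ≤ ((p:ℝ)^(a+1:ℤ))^n) := by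
  have hp1R : (1:ℝ) < p := Nat.one_lt_cast.2 hp.out.one_lt
  have hpR : (0:ℝ) < p := lt_trans one_pos hp1R
  set L := Real.log p with hLdef
  have hL : 0 < L := Real.log_pos hp1R
  set τ := Real.log t⁻¹ / (β * L) with hτdef
  set a := ⌈τ⌉ with hadef
  set u := t ^ (-1/β : ℝ) with hudef
  have hu0 : 0 < u := Real.rpow_pos_of_pos ht _
  have hpτ : (p:ℝ) ^ τ = u := by
    rw [hudef, Real.rpow_def_of_pos hpR, Real.rpow_def_of_pos ht]
    congr 1
    rw [hτdef, Real.log_inv]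
    field_simp
    ring
  have hpa : u ≤ (p:ℝ)^(a:ℤ) := by
    rw [← Real.rpow_intCast (p:ℝ) a, ← hpτ]
    exact Real.rpow_le_rpow_of_exponent_le hp1R.le (Int.le_ceil τ)
  have hpa' : (p:ℝ)^(a:ℤ) ≤ (p:ℝ) * u := by
    rw [← Real.rpow_intCast (p:ℝ) a, ← hpτ]
    calc (p:ℝ) ^ (a:ℝ) ≤ (p:ℝ) ^ (1 + τ) := by
          apply Real.rpow_le_rpow_of_exponent_le hp1R.le
          have := Int.ceil_lt_add_one τ
          push_cast
          linarith [Int.ceil_lt_add_one τ]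
      _ = (p:ℝ) * (p:ℝ)^τ := by rw [Real.rpow_add hpR, Real.rpow_one]
  have hub : u ^ β = t⁻¹ := by
    rw [hudef, ← Real.rpow_mul ht.le, show (-1/β)*β = -1 by field_simp, Real.rpow_neg_one]
  have hun : u ^ (n:ℕ) = t ^ (-((n:ℝ)/β)) := by
    rw [hudef, ← Real.rpow_natCast (t ^ (-1/β : ℝ)) n, ← Real.rpow_mul ht.le]
    congr 1
    field_simp
  have huinv : u⁻¹ = t ^ ((1:ℝ)/β) := by
    rw [hudef, show (-1/β) = -(1/β) by ring, Real.rpow_neg ht.le, inv_inv]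
  have hpa1 : u ≤ (p:ℝ)^(a+1:ℤ) :=
    hpa.trans (zpow_le_zpow_right₀ hp1R.le (by omega))
  refine ⟨a, ?_, ?_, ?_, ?_⟩
  · intro k hk
    have hbase : u ≤ (p:ℝ)^(k:ℤ) := hpa.trans (zpow_le_zpow_right₀ hp1R.le hk)
    have h2 : u^β ≤ ((p:ℝ)^(k:ℤ))^β := Real.rpow_le_rpow hu0.le hbase hβ.le
    calc (1:ℝ) = t * u^β := by rw [hub]; field_simp
      _ ≤ t * ((p:ℝ)^(k:ℤ))^β := by
          exact mul_le_mul_of_nonneg_left h2 ht.le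
  · calc ((p:ℝ)^(a:ℤ))^n ≤ ((p:ℝ) * u)^n := by
          exact pow_le_pow_left₀ (zpow_nonneg hpR.le _) hpa' n
      _ = (p:ℝ)^n * u^n := mul_pow _ _ _
      _ = (p:ℝ)^n * t ^ (-((n:ℝ)/β)) := by rw [hun]
  · have h1 : ((p:ℝ)^(a+1:ℤ))⁻¹ ≤ u⁻¹ := by
      apply inv_anti₀ hu0 hpa1
    calc t^(-(sExp n β)) * ((p:ℝ)^(a+1:ℤ))⁻¹
        ≤ t^(-(sExp n β)) * u⁻¹ := by
          exact mul_le_mul_of_nonneg_left h1 (Real.rpow_pos_of_pos ht _).le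
      _ = t^(-(sExp n β)) * t^((1:ℝ)/β) := by rw [huinv]
      _ = t^(-(sExp n β) + (1:ℝ)/β) := by rw [← Real.rpow_add ht]
      _ = t ^ (-((n:ℝ)/β)) := by
          congr 1
          rw [sExp]
          field_simp
          ring
  · intro ht1
    have hτ0 : 0 ≤ τ := by
      apply div_nonneg _ (by positivity)
      apply Real.log_nonneg
      rw [le_inv_comm₀ one_pos ht]
      simpa using ht1
    have ha0 : 0 ≤ a := Int.ceil_nonneg hτ0
    refine ⟨by omega, ?_, ?_⟩
    · have h1 : (p:ℝ)^(a+1:ℤ) ≤ (p:ℝ)^2 * u := by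
        calc (p:ℝ)^(a+1:ℤ) = (p:ℝ) * (p:ℝ)^(a:ℤ) := by
              rw [show (a+1:ℤ) = 1 + a by ring, zpow_add₀ (ne_of_gt hpR), zpow_one]
          _ ≤ (p:ℝ) * ((p:ℝ) * u) := by
              exact mul_le_mul_of_nonneg_left hpa' hpR.le
          _ = (p:ℝ)^2 * u := by ring
      have h2 : ((p:ℝ)^(a+1:ℤ))^β ≤ ((p:ℝ)^2 * u)^β :=
        Real.rpow_le_rpow (zpow_nonneg hpR.le _) h1 hβ.le
      have h3 : ((p:ℝ)^2 * u)^β = ((p:ℝ)^2)^β * t⁻¹ := by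
        rw [Real.mul_rpow (by positivity) hu0.le, hub]
      calc t * ((p:ℝ)^(a+1:ℤ))^β ≤ t * (((p:ℝ)^2)^β * t⁻¹) := by
            rw [← h3]; exact mul_le_mul_of_nonneg_left h2 ht.le
        _ = ((p:ℝ)^2)^β := by field_simp
    · calc t ^ (-((n:ℝ)/β)) = u^n := hun.symm
        _ ≤ ((p:ℝ)^(a+1:ℤ))^n := pow_le_pow_left₀ hu0.le hpa1 n

lemma zpow_pow_swap (k : ℤ) (m : ℕ) : ((p:ℝ)^(m:ℕ))^(k:ℤ) = ((p:ℝ)^(k:ℤ))^(m:ℕ) := by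
  have hpne : (p:ℝ) ≠ 0 := by
    have : (0:ℝ) < p := by exact_mod_cast hp.out.pos
    exact this.ne'
  rw [← zpow_natCast (p:ℝ) m, ← zpow_mul, mul_comm, zpow_mul, zpow_natCast]

lemma lintegral_eq_tsum (hn : 0 < n) (hμ : μ (closedBall (0 : Fin n → ℚ_[p]) 1) = 1)
    (t β : ℝ) :
    ∫⁻ ξ, ENNReal.ofReal (Real.exp (-(t * ‖ξ‖ ^ β))) ∂μ
      = ∑' k : ℤ, ENNReal.ofReal (Real.exp (-(t * ((p:ℝ)^(k:ℤ)) ^ β)))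
          * μ (shell (p := p) (n := n) k) := by
  set F : (Fin n → ℚ_[p]) → ℝ≥0∞ := fun ξ => ENNReal.ofReal (Real.exp (-(t * ‖ξ‖ ^ β))) with hF
  have hms : ∀ k : ℤ, MeasurableSet (shell (p := p) (n := n) k) :=
    fun k => measurableSet_closedBall.diff measurableSet_closedBall
  have h0 : μ {(0 : Fin n → ℚ_[p])} = 0 := meas_zero_singleton μ hn hμ
  have hsplit : ∫⁻ ξ, F ξ ∂μ = ∫⁻ ξ in {(0 : Fin n → ℚ_[p])}ᶜ, F ξ ∂μ := by
    rw [← lintegral_add_compl F (measurableSet_singleton (0 : Fin n → ℚ_[p])),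
      setLIntegral_measure_zero _ _ h0, zero_add]
  have hcomp : ({(0 : Fin n → ℚ_[p])}ᶜ : Set _) = ⋃ k : ℤ, shell (p := p) (n := n) k := by
    rw [iUnion_shells hn]
    ext x
    simp
  rw [hsplit, hcomp, lintegral_iUnion hms shells_disjoint]
  apply tsum_congr
  intro k
  have hconst : ∀ x ∈ shell (p := p) (n := n) k,
      F x = ENNReal.ofReal (Real.exp (-(t * ((p:ℝ)^(k:ℤ)) ^ β))) := by
    intro x hx
    rw [hF]
    simp only
    rw [norm_of_mem_shell hn k x hx]
  rw [setLIntegral_congr_fun (hms k) hconst, setLIntegral_const]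

noncomputable def C0 (n : ℕ) (β : ℝ) : ℝ := ((Nat.ceil (sExp n β)).factorial : ℝ)

noncomputable def DD (p n : ℕ) (β : ℝ) : ℝ :=
  (p:ℝ)^n * (1 - ((p:ℝ)^n)⁻¹)⁻¹ + C0 n β * (1 - (p:ℝ)⁻¹)⁻¹

lemma upper_lintegral (hn : 0 < n) (hμ : μ (closedBall (0 : Fin n → ℚ_[p]) 1) = 1)
    {β : ℝ} (hβ : 0 < β) (t : ℝ) (ht : 0 < t) :
    ∫⁻ ξ, ENNReal.ofReal (Real.exp (-(t * ‖ξ‖ ^ β))) ∂μ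
      ≤ ENNReal.ofReal (DD p n β * t ^ (-((n:ℝ)/β))) := by
  have hp1R : (1:ℝ) < p := Nat.one_lt_cast.2 hp.out.one_lt
  have hpR : (0:ℝ) < p := lt_trans one_pos hp1R
  have hpne : (p:ℝ) ≠ 0 := hpR.ne'
  set P : ℝ := (p:ℝ)^n with hPdef
  have hP1 : 1 < P := one_lt_pow₀ hp1R hn.ne'
  have hP0 : 0 < P := lt_trans one_pos hP1
  set s : ℝ := sExp n β with hsdef
  have hs0 : 0 < s := by rw [hsdef, sExp]; positivity
  have hC0 : 0 < C0 n β := by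
    rw [C0]; exact_mod_cast (Nat.ceil (sExp n β)).factorial_pos
  set T : ℤ → ℝ≥0∞ := fun k =>
    ENNReal.ofReal (Real.exp (-(t * ((p:ℝ)^(k:ℤ)) ^ β))) * μ (shell (p := p) (n := n) k) with hT
  obtain ⟨a, hxk, hqa, hts, -⟩ := scale_facts (p := p) (n := n) hβ t ht
  have htpow : 0 < t ^ (-((n:ℝ)/β)) := Real.rpow_pos_of_pos ht _
  -- generic bound T k ≤ ofReal (P^k)
  have hT1 : ∀ k : ℤ, T k ≤ ENNReal.ofReal (P ^ (k:ℤ)) := by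
    intro k
    rw [hT]
    simp only
    calc ENNReal.ofReal (Real.exp (-(t * ((p:ℝ)^(k:ℤ)) ^ β))) * μ (shell (p := p) (n := n) k)
        ≤ 1 * μ (closedBall (0 : Fin n → ℚ_[p]) ((p:ℝ)^(k:ℤ))) := by
          apply mul_le_mul'
          · rw [ENNReal.ofReal_le_one, Real.exp_le_one_iff]
            have : 0 ≤ t * ((p:ℝ)^(k:ℤ)) ^ β := by
              apply mul_nonneg ht.le (Real.rpow_nonneg (zpow_nonneg hpR.le _) _)
            linarith
          · exact measure_mono Set.diff_subset
      _ = ENNReal.ofReal (P ^ (k:ℤ)) := by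
          rw [one_mul, meas_ball_formula μ hμ, ← ofReal_p_pow_zpow]
  -- tail bound
  have hT2 : ∀ j : ℕ, T ((j:ℤ) + (a+1)) ≤
      ENNReal.ofReal ((C0 n β * (t^(-(s:ℝ)) * (((p:ℝ)^(a+1:ℤ))⁻¹))) * ((p:ℝ)⁻¹)^j) := by
    intro j
    set k : ℤ := (j:ℤ) + (a+1) with hkdef
    set y : ℝ := (p:ℝ)^(k:ℤ) with hydef
    have hy : 0 < y := zpow_pos hpR _
    have hx1 : 1 ≤ t * y ^ β := hxk k (by omega)
    have hexp : Real.exp (-(t * y ^ β)) ≤ C0 n β * (t * y ^ β) ^ (-(s:ℝ)) := by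
      rw [C0, ← hsdef]
      exact exp_le_rpow s hs0 _ hx1
    have hreal : C0 n β * (t * y ^ β) ^ (-(s:ℝ)) * y^n
        = (C0 n β * (t^(-(s:ℝ)) * (((p:ℝ)^(a+1:ℤ))⁻¹))) * ((p:ℝ)⁻¹)^j := by
      have h1 : (t * y ^ β) ^ (-(s:ℝ)) = t^(-(s:ℝ)) * (y^β)^(-(s:ℝ)) :=
        Real.mul_rpow ht.le (Real.rpow_nonneg hy.le _)
      have h2 : (y^β)^(-(s:ℝ)) = (y ^ ((n:ℕ)+1))⁻¹ := by
        rw [← Real.rpow_natCast y (n+1), ← Real.rpow_neg hy.le,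
          ← Real.rpow_mul hy.le]
        congr 1
        rw [hsdef, sExp]
        push_cast
        field_simp
      have h3 : y^n * (y ^ ((n:ℕ)+1))⁻¹ = y⁻¹ := by
        rw [pow_succ]
        field_simp
      have h4 : y⁻¹ = ((p:ℝ)^(a+1:ℤ))⁻¹ * ((p:ℝ)⁻¹)^j := by
        rw [hydef, hkdef, zpow_add₀ hpne, mul_inv, zpow_natCast, inv_pow, mul_comm]
      calc C0 n β * (t * y ^ β) ^ (-(s:ℝ)) * y^n
          = C0 n β * (t^(-(s:ℝ)) * ((y^β)^(-(s:ℝ)) * y^n)) := by rw [h1]; ring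
        _ = C0 n β * (t^(-(s:ℝ)) * y⁻¹) := by rw [h2, mul_comm ((y ^ ((n:ℕ)+1))⁻¹) (y^n), h3]
        _ = _ := by rw [h4]; ring
    calc T k ≤ ENNReal.ofReal (Real.exp (-(t * y ^ β))) * ENNReal.ofReal (y^n) := by
          rw [hT]
          simp only
          apply mul_le_mul_right
          calc μ (shell (p := p) (n := n) k)
              ≤ μ (closedBall (0 : Fin n → ℚ_[p]) ((p:ℝ)^(k:ℤ))) := measure_mono Set.diff_subset
            _ = ENNReal.ofReal (y^n) := by
                rw [meas_ball_formula μ hμ, ← ofReal_p_pow_zpow, zpow_pow_swap]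
      _ ≤ ENNReal.ofReal (C0 n β * (t * y ^ β) ^ (-(s:ℝ))) * ENNReal.ofReal (y^n) := by
          apply mul_le_mul_left
          exact ENNReal.ofReal_le_ofReal hexp
      _ = ENNReal.ofReal (C0 n β * (t * y ^ β) ^ (-(s:ℝ)) * y^n) := by
          rw [← ENNReal.ofReal_mul (by positivity)]
      _ = _ := by rw [hreal]
  -- head bound
  have hT3 : ∀ j : ℕ, T (-((j:ℤ)+1) + (a+1)) ≤
      ENNReal.ofReal ((P^(a:ℤ)) * (P⁻¹)^j) := by
    intro j
    have hidx : (-((j:ℤ)+1) + (a+1)) = a - j := by ring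
    rw [hidx]
    refine (hT1 _).trans ?_
    apply ENNReal.ofReal_le_ofReal
    rw [zpow_sub₀ hP0.ne', div_eq_mul_inv, zpow_natCast, inv_pow]
  -- splitting
  have hsplit : ∑' k : ℤ, T k
      = (∑' j : ℕ, T ((j:ℤ) + (a+1))) + ∑' j : ℕ, T (-((j:ℤ)+1) + (a+1)) := by
    have h1 : ∑' j : ℕ, (T (((j:ℤ)) + (a+1)) + T (-((j:ℤ)+1) + (a+1)))
        = ∑' k : ℤ, T (k + (a+1)) :=
      tsum_nat_add_neg_add_one (f := fun k : ℤ => T (k + (a+1))) ENNReal.summable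
    have h2 : ∑' k : ℤ, T (k + (a+1)) = ∑' k : ℤ, T k :=
      (Equiv.addRight ((a:ℤ)+1)).tsum_eq T
    rw [← h2, ← h1, ENNReal.tsum_add]
  -- geometric sums
  have hgeom : ∀ (c r : ℝ), 0 ≤ c → 0 ≤ r → r < 1 →
      ∑' j : ℕ, ENNReal.ofReal (c * r^j) ≤ ENNReal.ofReal (c * (1-r)⁻¹) := by
    intro c r hc hr hr1
    have : ∀ j : ℕ, ENNReal.ofReal (c * r^j) = ENNReal.ofReal c * (ENNReal.ofReal r)^j := by
      intro j
      rw [ENNReal.ofReal_mul hc, ENNReal.ofReal_pow hr]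
    rw [tsum_congr this, ENNReal.tsum_mul_left, ENNReal.tsum_geometric]
    have hsub : (1 : ℝ≥0∞) - ENNReal.ofReal r = ENNReal.ofReal (1 - r) := by
      rw [ENNReal.ofReal_sub _ hr, ENNReal.ofReal_one]
    rw [hsub, ← ENNReal.ofReal_inv_of_pos (by linarith), ← ENNReal.ofReal_mul hc]
  have hPinv : P⁻¹ < 1 := inv_lt_one_of_one_lt₀ hP1
  have hpinv : (p:ℝ)⁻¹ < 1 := inv_lt_one_of_one_lt₀ hp1R
  -- assemble
  rw [lintegral_eq_tsum μ hn hμ t β, ← hT, hsplit]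
  have hB : ∑' j : ℕ, T ((j:ℤ) + (a+1))
      ≤ ENNReal.ofReal ((C0 n β * (1 - (p:ℝ)⁻¹)⁻¹) * t ^ (-((n:ℝ)/β))) := by
    refine (ENNReal.tsum_le_tsum hT2).trans ?_
    refine (hgeom _ _ (by positivity) (by positivity) hpinv).trans ?_
    apply ENNReal.ofReal_le_ofReal
    have h5 : t^(-(s:ℝ)) * (((p:ℝ)^(a+1:ℤ))⁻¹) ≤ t ^ (-((n:ℝ)/β)) := by
      rw [hsdef]; exact hts
    have hK2 : (0:ℝ) < (1 - (p:ℝ)⁻¹)⁻¹ := by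
      apply inv_pos.2; linarith
    calc C0 n β * (t^(-(s:ℝ)) * (((p:ℝ)^(a+1:ℤ))⁻¹)) * (1 - (p:ℝ)⁻¹)⁻¹
        ≤ C0 n β * (t ^ (-((n:ℝ)/β))) * (1 - (p:ℝ)⁻¹)⁻¹ := by
          apply mul_le_mul_of_nonneg_right _ hK2.le
          exact mul_le_mul_of_nonneg_left h5 hC0.le
      _ = (C0 n β * (1 - (p:ℝ)⁻¹)⁻¹) * t ^ (-((n:ℝ)/β)) := by ring
  have hA : ∑' j : ℕ, T (-((j:ℤ)+1) + (a+1))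
      ≤ ENNReal.ofReal (((p:ℝ)^n * (1 - ((p:ℝ)^n)⁻¹)⁻¹) * t ^ (-((n:ℝ)/β))) := by
    refine (ENNReal.tsum_le_tsum hT3).trans ?_
    refine (hgeom _ _ (zpow_nonneg hP0.le _) (by positivity) hPinv).trans ?_
    apply ENNReal.ofReal_le_ofReal
    have h6 : P^(a:ℤ) ≤ (p:ℝ)^n * t ^ (-((n:ℝ)/β)) := by
      rw [hPdef, zpow_pow_swap]
      exact hqa
    have hK1 : (0:ℝ) < (1 - P⁻¹)⁻¹ := by
      apply inv_pos.2; linarith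
    calc P^(a:ℤ) * (1 - P⁻¹)⁻¹ ≤ ((p:ℝ)^n * t ^ (-((n:ℝ)/β))) * (1 - P⁻¹)⁻¹ :=
          mul_le_mul_of_nonneg_right h6 hK1.le
      _ = ((p:ℝ)^n * (1 - ((p:ℝ)^n)⁻¹)⁻¹) * t ^ (-((n:ℝ)/β)) := by rw [hPdef]; ring
  calc (∑' j : ℕ, T ((j:ℤ) + (a+1))) + ∑' j : ℕ, T (-((j:ℤ)+1) + (a+1))
      ≤ ENNReal.ofReal ((C0 n β * (1 - (p:ℝ)⁻¹)⁻¹) * t ^ (-((n:ℝ)/β)))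
        + ENNReal.ofReal (((p:ℝ)^n * (1 - ((p:ℝ)^n)⁻¹)⁻¹) * t ^ (-((n:ℝ)/β))) :=
        add_le_add hB hA
    _ = ENNReal.ofReal (DD p n β * t ^ (-((n:ℝ)/β))) := by
        have hg1 : (0:ℝ) ≤ (1 - (p:ℝ)⁻¹)⁻¹ := inv_nonneg.2 (by linarith)
        have hg2 : (0:ℝ) ≤ (1 - ((p:ℝ)^n)⁻¹)⁻¹ := by
          rw [← hPdef]; exact inv_nonneg.2 (by linarith)
        rw [← ENNReal.ofReal_add
          (mul_nonneg (mul_nonneg hC0.le hg1) htpow.le)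
          (mul_nonneg (mul_nonneg (pow_nonneg (Nat.cast_nonneg p) n) hg2) htpow.le), DD]
        congr 1
        ring

noncomputable def dd (p n : ℕ) (β : ℝ) : ℝ :=
  Real.exp (-(((p:ℝ)^2)^β)) * (1 - ((p:ℝ)^n)⁻¹)

theorem gaussian_type_integral_bounds' (hn : 0 < n)
    (hμ : μ (closedBall (0 : Fin n → ℚ_[p]) 1) = 1)
    (β : ℝ) (hβ : 0 < β) :
    ∃ d D : ℝ, 0 < d ∧ 0 < D ∧
      (∀ t : ℝ, 0 < t →
        (∫ ξ : Fin n → ℚ_[p], Real.exp (-(t * ‖ξ‖ ^ β)) ∂μ) ≤ D * t ^ (-((n : ℝ) / β))) ∧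
      (∀ t : ℝ, 0 < t → t ≤ 1 →
        d * t ^ (-((n : ℝ) / β)) ≤
          ∫ ξ in {ξ : Fin n → ℚ_[p] | 1 < ‖ξ‖}, Real.exp (-(t * ‖ξ‖ ^ β)) ∂μ) := by
  have hp1R : (1:ℝ) < p := Nat.one_lt_cast.2 hp.out.one_lt
  have hpR : (0:ℝ) < p := lt_trans one_pos hp1R
  set P : ℝ := (p:ℝ)^n with hPdef
  have hP1 : 1 < P := one_lt_pow₀ hp1R hn.ne'
  have hP0 : 0 < P := lt_trans one_pos hP1
  have hPinv : P⁻¹ < 1 := inv_lt_one_of_one_lt₀ hP1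
  have hC0 : 0 < C0 n β := by
    rw [C0]; exact_mod_cast (Nat.ceil (sExp n β)).factorial_pos
  have hd0 : 0 < dd p n β := by
    rw [dd, ← hPdef]
    have := Real.exp_pos (-(((p:ℝ)^2)^β))
    nlinarith
  have hD0 : 0 < DD p n β := by
    rw [DD, ← hPdef]
    have h1 : (0:ℝ) < (1 - P⁻¹)⁻¹ := inv_pos.2 (by linarith)
    have h2 : (0:ℝ) < (1 - (p:ℝ)⁻¹)⁻¹ := inv_pos.2 (by
      have : (p:ℝ)⁻¹ < 1 := inv_lt_one_of_one_lt₀ hp1R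
      linarith)
    positivity
  refine ⟨dd p n β, DD p n β, hd0, hD0, ?_, ?_⟩
  · intro t ht
    have hcont : Continuous (fun ξ : Fin n → ℚ_[p] => Real.exp (-(t * ‖ξ‖ ^ β))) := by
      apply Real.continuous_exp.comp
      apply Continuous.neg
      apply continuous_const.mul
      exact continuous_norm.rpow_const (fun x => Or.inr hβ.le)
    rw [integral_eq_lintegral_of_nonneg_ae
      (Filter.Eventually.of_forall (fun ξ => (Real.exp_pos _).le))
      hcont.aestronglyMeasurable]
    apply ENNReal.toReal_le_of_le_ofReal
    · positivity
    · exact upper_lintegral μ hn hμ hβ t ht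
  · intro t ht ht1
    have hcont : Continuous (fun ξ : Fin n → ℚ_[p] => Real.exp (-(t * ‖ξ‖ ^ β))) := by
      apply Real.continuous_exp.comp
      apply Continuous.neg
      apply continuous_const.mul
      exact continuous_norm.rpow_const (fun x => Or.inr hβ.le)
    have hInt : Integrable (fun ξ : Fin n → ℚ_[p] => Real.exp (-(t * ‖ξ‖ ^ β))) μ := by
      refine ⟨hcont.aestronglyMeasurable, ?_⟩
      rw [hasFiniteIntegral_iff_ofReal
        (Filter.Eventually.of_forall (fun ξ => (Real.exp_pos _).le))]
      exact lt_of_le_of_lt (upper_lintegral μ hn hμ hβ t ht) ENNReal.ofReal_lt_top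
    obtain ⟨a, hxk, -, -, hlow⟩ := scale_facts (p := p) (n := n) hβ t ht
    obtain ⟨hk1, hxle, hpk⟩ := hlow ht1
    set k : ℤ := a + 1 with hkdef
    have hms : MeasurableSet (shell (p := p) (n := n) k) :=
      measurableSet_closedBall.diff measurableSet_closedBall
    have hpk1 : (1:ℝ) < (p:ℝ)^(k:ℤ) := by
      calc (1:ℝ) < (p:ℝ) := hp1R
        _ = (p:ℝ)^(1:ℤ) := (zpow_one _).symm
        _ ≤ (p:ℝ)^(k:ℤ) := zpow_le_zpow_right₀ hp1R.le hk1
    have hsubset : shell (p := p) (n := n) k ⊆ {ξ : Fin n → ℚ_[p] | 1 < ‖ξ‖} := by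
      intro x hx
      rw [Set.mem_setOf_eq, norm_of_mem_shell hn k x hx]
      exact hpk1
    have hstep1 : ∫ ξ in shell (p := p) (n := n) k, Real.exp (-(t * ‖ξ‖ ^ β)) ∂μ
        = (μ (shell (p := p) (n := n) k)).toReal * Real.exp (-(t * ((p:ℝ)^(k:ℤ)) ^ β)) := by
      rw [setIntegral_congr_fun hms
        (fun x hx => by rw [norm_of_mem_shell hn k x hx]), setIntegral_const, smul_eq_mul, measureReal_def]
    have hmeasval : (μ (shell (p := p) (n := n) k)).toReal = P^(k:ℤ) * (1 - P⁻¹) := by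
      rw [meas_shell μ hμ k, ← ofReal_p_pow_zpow, ← ofReal_p_pow_zpow,
        ENNReal.toReal_sub_of_le
          (ENNReal.ofReal_le_ofReal (zpow_le_zpow_right₀ hP1.le (by omega)))
          ENNReal.ofReal_ne_top,
        ENNReal.toReal_ofReal (zpow_nonneg hP0.le _),
        ENNReal.toReal_ofReal (zpow_nonneg hP0.le _)]
      have hPk : P^(k-1:ℤ) = P^(k:ℤ) * P⁻¹ := by
        rw [zpow_sub₀ hP0.ne', zpow_one, div_eq_mul_inv]
      rw [hPk]
      ring
    have htpow : 0 < t ^ (-((n:ℝ)/β)) := Real.rpow_pos_of_pos ht _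
    calc dd p n β * t ^ (-((n : ℝ) / β))
        = Real.exp (-(((p:ℝ)^2)^β)) * ((1 - P⁻¹) * t ^ (-((n:ℝ)/β))) := by
          rw [dd, ← hPdef]; ring
      _ ≤ Real.exp (-(t * ((p:ℝ)^(k:ℤ)) ^ β)) * ((1 - P⁻¹) * P^(k:ℤ)) := by
          apply mul_le_mul
          · exact Real.exp_le_exp.2 (by linarith)
          · have hPk : P^(k:ℤ) = ((p:ℝ)^(k:ℤ))^n := by rw [hPdef, zpow_pow_swap]
            rw [hPk]
            exact mul_le_mul_of_nonneg_left hpk (by linarith)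
          · exact mul_nonneg (by linarith) htpow.le
          · exact (Real.exp_pos _).le
      _ = (μ (shell (p := p) (n := n) k)).toReal * Real.exp (-(t * ((p:ℝ)^(k:ℤ)) ^ β)) := by
          rw [hmeasval]; ring
      _ = ∫ ξ in shell (p := p) (n := n) k, Real.exp (-(t * ‖ξ‖ ^ β)) ∂μ := hstep1.symm
      _ ≤ ∫ ξ in {ξ : Fin n → ℚ_[p] | 1 < ‖ξ‖}, Real.exp (-(t * ‖ξ‖ ^ β)) ∂μ := by
          apply setIntegral_mono_set hInt.integrableOn
            (Filter.Eventually.of_forall (fun ξ => (Real.exp_pos _).le))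
            (HasSubset.Subset.eventuallyLE hsubset)

end GaussPadicAux

/-- There are constants `d, D > 0` (depending only on `p, n, β`) such that
`∫_{ℚ_p^n} e^{−t‖ξ‖^β} dⁿξ ≤ D t^{−n/β}` for all `t > 0`, and
`d t^{−n/β} ≤ ∫_{ℚ_p^n∖ℤ_p^n} e^{−t‖ξ‖^β} dⁿξ` for all `0 < t ≤ 1`. -/
theorem gaussian_type_integral_bounds {p n : ℕ} [Fact p.Prime] (hn : 0 < n)
    (μ : Measure (Fin n → ℚ_[p])) [μ.IsAddHaarMeasure]
    (hμ : μ (closedBall (0 : Fin n → ℚ_[p]) 1) = 1)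
    (β : ℝ) (hβ : 0 < β) :
    ∃ d D : ℝ, 0 < d ∧ 0 < D ∧
      (∀ t : ℝ, 0 < t →
        (∫ ξ : Fin n → ℚ_[p], Real.exp (-(t * ‖ξ‖ ^ β)) ∂μ) ≤ D * t ^ (-((n : ℝ) / β))) ∧
      (∀ t : ℝ, 0 < t → t ≤ 1 →
        d * t ^ (-((n : ℝ) / β)) ≤
          ∫ ξ in {ξ : Fin n → ℚ_[p] | 1 < ‖ξ‖}, Real.exp (-(t * ‖ξ‖ ^ β)) ∂μ) := by
  exact GaussPadicAux.gaussian_type_integral_bounds' μ hn hμ β hβ
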